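/- Let N ≥ 8 be an integer divisible by 4. If b ∈ ℝ^{N/2} satisfies ψ^{(i,j,k,l)}(b) = 0 for all (i,j,k,l) ∈ S_1 ∪ S_2, then ψ^{(i,j,k,l)}(b) = 0 for all (i,j,k,l) ∈ S. -/

import Mathlib

/-- `c_α = cos(απ/N)` -/
noncomputable def cc (N : ℕ) (a : ℤ) : ℝ := Real.cos (a * Real.pi / N)

/-- `s_α = sin(απ/N)` -/
noncomputable def ss (N : ℕ) (a : ℤ) : ℝ := Real.sin (a * Real.pi / N)

/-- `f_q^{(i,j,k,l)}` -/
noncomputable def ff (N : ℕ) (i j k l : ℤ) (q : ℕ) : ℝ :=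
  if Odd q then cc N (i * q) * cc N (j * q) * cc N (k * q) * cc N (l * q)
  else ss N (i * q) * ss N (j * q) * ss N (k * q) * ss N (l * q)

/-- `ψ^{(i,j,k,l)}(b)` -/
noncomputable def psi (N : ℕ) (b : Fin (N / 2) → ℝ) (i j k l : ℤ) : ℝ :=
  -∑ q : Fin (N / 2), (-1 : ℝ) ^ ((q : ℕ) + 1) * b q * ff N i j k l ((q : ℕ) + 1)

/-- `S = {(i,j,k,l) : −N_h ≤ i ≤ j ≤ k ≤ l ≤ N_h, i+j+k+l = N}` with `N_h = N/2 − 1`. -/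
def Sset (N : ℕ) : Set (ℤ × ℤ × ℤ × ℤ) :=
  {x | -((N : ℤ) / 2 - 1) ≤ x.1 ∧ x.1 ≤ x.2.1 ∧ x.2.1 ≤ x.2.2.1 ∧
    x.2.2.1 ≤ x.2.2.2 ∧ x.2.2.2 ≤ (N : ℤ) / 2 - 1 ∧
    x.1 + x.2.1 + x.2.2.1 + x.2.2.2 = (N : ℤ)}

/-- `S₁ = {(0, n+1, N/2−n, N/2−1) : 1 ≤ n ≤ N/4−1}` -/
def S1set (N : ℕ) : Set (ℤ × ℤ × ℤ × ℤ) :=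
  {x | ∃ n : ℤ, 1 ≤ n ∧ n ≤ (N : ℤ) / 4 - 1 ∧
    x = (0, n + 1, (N : ℤ) / 2 - n, (N : ℤ) / 2 - 1)}

/-- `S₂ = {(2−m, m, N/2−1, N/2−1) : m = 1 or 3 ≤ m ≤ N/4+1}` -/
def S2set (N : ℕ) : Set (ℤ × ℤ × ℤ × ℤ) :=
  {x | ∃ m : ℤ, (m = 1 ∨ (3 ≤ m ∧ m ≤ (N : ℤ) / 4 + 1)) ∧
    x = (2 - m, m, (N : ℤ) / 2 - 1, (N : ℤ) / 2 - 1)}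

noncomputable def UU (N : ℕ) (b : Fin (N / 2) → ℝ) (a : ℤ) : ℝ :=
  ∑ q : Fin (N / 2), b q * Real.cos (2 * (a : ℝ) * ((q : ℕ) + 1) * Real.pi / N)

noncomputable def VV (N : ℕ) (b : Fin (N / 2) → ℝ) (a : ℤ) : ℝ :=
  ∑ q : Fin (N / 2), (-1 : ℝ) ^ (q : ℕ) * b q * Real.cos (2 * (a : ℝ) * ((q : ℕ) + 1) * Real.pi / N)

lemma cos_quad (x y z : ℝ) :
    8 * (Real.cos x * Real.cos y * Real.cos z * Real.cos (x+y+z)) =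
    Real.cos (2*(x+y)) + Real.cos (2*(x+z)) + Real.cos (2*(y+z)) + 1
      + Real.cos (2*x) + Real.cos (2*y) + Real.cos (2*z) + Real.cos (2*(x+y+z)) := by
  simp only [Real.cos_two_mul, Real.cos_add, Real.sin_add]
  linear_combination
    ((-2 * Real.sin z ^ 2) + (-2 * Real.cos y ^ 2 * Real.sin z ^ 2) + (-4 * Real.sin y * Real.cos y * Real.sin z * Real.cos z) + (-2 * Real.sin y ^ 2) + (-2 * Real.sin y ^ 2 * Real.cos z ^ 2)) * Real.sin_sq_add_cos_sq x
    + ((-2) + (-2 * Real.cos z ^ 2) + (-2 * Real.sin z ^ 2) + (2 * Real.cos x ^ 2) + (2 * Real.cos x ^ 2 * Real.cos z ^ 2) + (-2 * Real.cos x ^ 2 * Real.sin z ^ 2) + (-4 * Real.sin x * Real.cos x * Real.sin z * Real.cos z)) * Real.sin_sq_add_cos_sq y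
    + ((-4) + (4 * Real.cos x ^ 2 * Real.cos y ^ 2) + (-4 * Real.sin x * Real.cos x * Real.sin y * Real.cos y)) * Real.sin_sq_add_cos_sq z

lemma sin_quad (x y z : ℝ) :
    8 * (Real.sin x * Real.sin y * Real.sin z * Real.sin (x+y+z)) =
    -(Real.cos (2*(x+y)) + Real.cos (2*(x+z)) + Real.cos (2*(y+z)) + 1)
      + (Real.cos (2*x) + Real.cos (2*y) + Real.cos (2*z) + Real.cos (2*(x+y+z))) := by
  simp only [Real.cos_two_mul, Real.cos_add, Real.sin_add]
  linear_combination
    ((2 * Real.sin z ^ 2) + (-2 * Real.cos y ^ 2 * Real.sin z ^ 2) + (4 * Real.sin y * Real.cos y * Real.sin z * Real.cos z) + (2 * Real.sin y ^ 2) + (-2 * Real.sin y ^ 2 * Real.cos z ^ 2) + (-8 * Real.sin y ^ 2 * Real.sin z ^ 2)) * Real.sin_sq_add_cos_sq x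
    + ((2) + (-2 * Real.cos z ^ 2) + (-6 * Real.sin z ^ 2) + (-2 * Real.cos x ^ 2) + (2 * Real.cos x ^ 2 * Real.cos z ^ 2) + (6 * Real.cos x ^ 2 * Real.sin z ^ 2) + (4 * Real.sin x * Real.cos x * Real.sin z * Real.cos z)) * Real.sin_sq_add_cos_sq y
    + ((-4) + (4 * Real.cos y ^ 2) + (4 * Real.cos x ^ 2) + (-4 * Real.cos x ^ 2 * Real.cos y ^ 2) + (4 * Real.sin x * Real.cos x * Real.sin y * Real.cos y)) * Real.sin_sq_add_cos_sq z

lemma key_odd (Q : ℕ) (hQ : Odd Q) (x y z w : ℝ) (hw : x + y + z + w = Q * Real.pi) :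
    Real.cos x * Real.cos y * Real.cos z * Real.cos w =
    -(1/8) * ((Real.cos (2*(x+y)) + Real.cos (2*(x+z)) + Real.cos (2*(x+w)) + 1)
      + (Real.cos (2*x) + Real.cos (2*y) + Real.cos (2*z) + Real.cos (2*w))) := by
  have hw' : w = Q * Real.pi - (x+y+z) := by linarith
  subst hw'
  rw [Real.cos_nat_mul_pi_sub,
    show 2*(x+(Q * Real.pi - (x+y+z))) = (Q:ℕ) * (2*Real.pi) - 2*(y+z) by push_cast; ring,
    show 2*(Q * Real.pi - (x+y+z)) = (Q:ℕ) * (2*Real.pi) - 2*(x+y+z) by push_cast; ring,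
    Real.cos_nat_mul_two_pi_sub, Real.cos_nat_mul_two_pi_sub, hQ.neg_one_pow]
  linear_combination (-(1:ℝ)/8) * cos_quad x y z

lemma key_even (Q : ℕ) (hQ : Even Q) (x y z w : ℝ) (hw : x + y + z + w = Q * Real.pi) :
    Real.sin x * Real.sin y * Real.sin z * Real.sin w =
    (1/8) * ((Real.cos (2*(x+y)) + Real.cos (2*(x+z)) + Real.cos (2*(x+w)) + 1)
      - (Real.cos (2*x) + Real.cos (2*y) + Real.cos (2*z) + Real.cos (2*w))) := by
  have hw' : w = Q * Real.pi - (x+y+z) := by linarith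
  subst hw'
  rw [Real.sin_nat_mul_pi_sub,
    show 2*(x+(Q * Real.pi - (x+y+z))) = (Q:ℕ) * (2*Real.pi) - 2*(y+z) by push_cast; ring,
    show 2*(Q * Real.pi - (x+y+z)) = (Q:ℕ) * (2*Real.pi) - 2*(x+y+z) by push_cast; ring,
    Real.cos_nat_mul_two_pi_sub, Real.cos_nat_mul_two_pi_sub, hQ.neg_one_pow]
  linear_combination (-(1:ℝ)/8) * sin_quad x y z


lemma term_expand (N : ℕ) (hN : (N:ℝ) ≠ 0) (i j k l : ℤ) (hsum : i + j + k + l = (N:ℤ))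
    (Q : ℕ) :
    (-1:ℝ)^Q * ff N i j k l Q =
      (1/8) * (Real.cos (2*((i+j : ℤ):ℝ)*Q*Real.pi/N) + Real.cos (2*((i+k : ℤ):ℝ)*Q*Real.pi/N)
        + Real.cos (2*((i+l : ℤ):ℝ)*Q*Real.pi/N) + 1)
      - (1/8) * (-1:ℝ)^Q * (Real.cos (2*(i:ℝ)*Q*Real.pi/N) + Real.cos (2*(j:ℝ)*Q*Real.pi/N)
        + Real.cos (2*(k:ℝ)*Q*Real.pi/N) + Real.cos (2*(l:ℝ)*Q*Real.pi/N)) := by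
  have hR : (i:ℝ) + j + k + l = N := by exact_mod_cast congrArg (Int.cast : ℤ → ℝ) hsum
  have hw : (i:ℝ)*Q*Real.pi/N + (j:ℝ)*Q*Real.pi/N + (k:ℝ)*Q*Real.pi/N + (l:ℝ)*Q*Real.pi/N
      = Q*Real.pi := by
    field_simp
    linear_combination (Q:ℝ) * hR
  have e1 : (2*((i+j : ℤ):ℝ)*Q*Real.pi/N) = 2*((i:ℝ)*Q*Real.pi/N + (j:ℝ)*Q*Real.pi/N) := by
    push_cast; ring
  have e2 : (2*((i+k : ℤ):ℝ)*Q*Real.pi/N) = 2*((i:ℝ)*Q*Real.pi/N + (k:ℝ)*Q*Real.pi/N) := by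
    push_cast; ring
  have e3 : (2*((i+l : ℤ):ℝ)*Q*Real.pi/N) = 2*((i:ℝ)*Q*Real.pi/N + (l:ℝ)*Q*Real.pi/N) := by
    push_cast; ring
  have e4 : ∀ a : ℤ, (2*(a:ℝ)*Q*Real.pi/N) = 2*((a:ℝ)*Q*Real.pi/N) := by
    intro a; ring
  have e5 : ∀ a : ℤ, ((a*Q : ℤ):ℝ)*Real.pi/N = (a:ℝ)*Q*Real.pi/N := by
    intro a; push_cast; ring
  rw [e1, e2, e3, e4 i, e4 j, e4 k, e4 l]
  rcases Nat.even_or_odd Q with hQ | hQ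
  · rw [ff, if_neg (Nat.not_odd_iff_even.mpr hQ), hQ.neg_one_pow]
    unfold ss
    rw [e5 i, e5 j, e5 k, e5 l]
    linear_combination key_even Q hQ _ _ _ _ hw
  · rw [ff, if_pos hQ, hQ.neg_one_pow]
    unfold cc
    rw [e5 i, e5 j, e5 k, e5 l]
    linear_combination (-1 : ℝ) * key_odd Q hQ _ _ _ _ hw

lemma psi_expand (N : ℕ) (hN : (N:ℝ) ≠ 0) (b : Fin (N / 2) → ℝ) (i j k l : ℤ)
    (hsum : i + j + k + l = (N:ℤ)) :
    psi N b i j k l = -(1/8) * (UU N b (i+j) + UU N b (i+k) + UU N b (i+l) + UU N b 0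
      + VV N b i + VV N b j + VV N b k + VV N b l) := by
  unfold psi UU VV
  rw [← Finset.sum_add_distrib, ← Finset.sum_add_distrib, ← Finset.sum_add_distrib,
    ← Finset.sum_add_distrib, ← Finset.sum_add_distrib, ← Finset.sum_add_distrib,
    ← Finset.sum_add_distrib, ← Finset.sum_neg_distrib, Finset.mul_sum]
  refine Finset.sum_congr rfl fun q _ => ?_
  have := term_expand N hN i j k l hsum ((q : ℕ) + 1)
  have h0 : Real.cos (2 * ((0:ℤ):ℝ) * ((q:ℕ)+1) * Real.pi / N) = 1 := by
    norm_num
  rw [h0]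
  calc -((-1 : ℝ) ^ ((q : ℕ) + 1) * b q * ff N i j k l ((q : ℕ) + 1))
      = -(b q * ((-1 : ℝ) ^ ((q : ℕ) + 1) * ff N i j k l ((q : ℕ) + 1))) := by ring
    _ = _ := by rw [this]; push_cast; ring


lemma UU_neg (N : ℕ) (b : Fin (N / 2) → ℝ) (a : ℤ) : UU N b (-a) = UU N b a := by
  unfold UU
  refine Finset.sum_congr rfl fun q _ => ?_
  rw [show (2*((-a : ℤ):ℝ)*((q:ℕ)+1)*Real.pi/N) = -(2*(a:ℝ)*((q:ℕ)+1)*Real.pi/N) by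
    push_cast; ring, Real.cos_neg]

lemma VV_neg (N : ℕ) (b : Fin (N / 2) → ℝ) (a : ℤ) : VV N b (-a) = VV N b a := by
  unfold VV
  refine Finset.sum_congr rfl fun q _ => ?_
  rw [show (2*((-a : ℤ):ℝ)*((q:ℕ)+1)*Real.pi/N) = -(2*(a:ℝ)*((q:ℕ)+1)*Real.pi/N) by
    push_cast; ring, Real.cos_neg]

lemma UU_Msub (N : ℕ) (hN : (N:ℝ) ≠ 0) (b : Fin (N / 2) → ℝ) (M a : ℤ)
    (hM : 2*M = (N:ℤ)) : UU N b (M - a) = - VV N b a := by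
  have hMr : 2*(M:ℝ) = (N:ℝ) := by exact_mod_cast congrArg (Int.cast : ℤ → ℝ) hM
  have hM0 : (M:ℝ) ≠ 0 := by intro h; apply hN; rw [← hMr, h]; ring
  unfold UU VV
  rw [← Finset.sum_neg_distrib]
  refine Finset.sum_congr rfl fun q _ => ?_
  have e : 2*((M - a : ℤ):ℝ)*((q:ℕ)+1)*Real.pi/N
      = (((q:ℕ)+1 : ℕ):ℝ)*Real.pi - 2*(a:ℝ)*((q:ℕ)+1)*Real.pi/N := by
    rw [← hMr]; push_cast; field_simp
  rw [e, Real.cos_nat_mul_pi_sub, pow_succ]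
  push_cast; ring

lemma VV_Msub (N : ℕ) (hN : (N:ℝ) ≠ 0) (b : Fin (N / 2) → ℝ) (M a : ℤ)
    (hM : 2*M = (N:ℤ)) : VV N b (M - a) = - UU N b a := by
  have hMr : 2*(M:ℝ) = (N:ℝ) := by exact_mod_cast congrArg (Int.cast : ℤ → ℝ) hM
  have hM0 : (M:ℝ) ≠ 0 := by intro h; apply hN; rw [← hMr, h]; ring
  unfold UU VV
  rw [← Finset.sum_neg_distrib]
  refine Finset.sum_congr rfl fun q _ => ?_
  have e : 2*((M - a : ℤ):ℝ)*((q:ℕ)+1)*Real.pi/N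
      = (((q:ℕ)+1 : ℕ):ℝ)*Real.pi - 2*(a:ℝ)*((q:ℕ)+1)*Real.pi/N := by
    rw [← hMr]; push_cast; field_simp
  rw [e, Real.cos_nat_mul_pi_sub, pow_succ]
  have hsq : ((-1:ℝ))^(q:ℕ) * ((-1:ℝ))^(q:ℕ) = 1 := by
    rw [← pow_add]; exact Even.neg_one_pow ⟨(q:ℕ), rfl⟩
  push_cast
  linear_combination (-(b q * Real.cos (2*(a:ℝ)*((q:ℕ)+1)*Real.pi/N))) * hsq

lemma UU_Nsub (N : ℕ) (hN : (N:ℝ) ≠ 0) (b : Fin (N / 2) → ℝ) (a : ℤ) :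
    UU N b ((N:ℤ) - a) = UU N b a := by
  unfold UU
  refine Finset.sum_congr rfl fun q _ => ?_
  have e : 2*(((N:ℤ) - a : ℤ):ℝ)*((q:ℕ)+1)*Real.pi/N
      = (((q:ℕ)+1 : ℕ):ℝ)*(2*Real.pi) - 2*(a:ℝ)*((q:ℕ)+1)*Real.pi/N := by
    push_cast; field_simp
  rw [e, Real.cos_nat_mul_two_pi_sub]

set_option maxHeartbeats 1600000 in
theorem psi_zero_on_S_of_zero_on_S1_union_S2 (N : ℕ) (hN4 : 4 ∣ N) (hN8 : 8 ≤ N)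
    (b : Fin (N / 2) → ℝ)
    (hb : ∀ x ∈ S1set N ∪ S2set N, psi N b x.1 x.2.1 x.2.2.1 x.2.2.2 = 0) :
    ∀ x ∈ Sset N, psi N b x.1 x.2.1 x.2.2.1 x.2.2.2 = 0 := by
  obtain ⟨K, rfl⟩ := hN4
  have hK2 : 2 ≤ K := by omega
  have hNr : ((4*K:ℕ):ℝ) ≠ 0 := Nat.cast_ne_zero.mpr (by omega)
  have hdiv2 : ((4*K:ℕ):ℤ)/2 = 2*(K:ℤ) := by omega
  set u := UU (4*K) b with hu
  set v := VV (4*K) b with hv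
  set DR := u 2 - 2*u 1 + u 0 with hDR
  set sR := u 1 + v 1 - (u 0 + v 0) with hsR
  -- specialized fold lemmas
  have hNegV : ∀ a : ℤ, v (-a) = v a := fun a => VV_neg (4*K) b a
  have hMsubU : ∀ a : ℤ, u (2*(K:ℤ) - a) = - v a := fun a =>
    UU_Msub (4*K) hNr b (2*(K:ℤ)) a (by push_cast; ring)
  have hMsubV : ∀ a : ℤ, v (2*(K:ℤ) - a) = - u a := fun a =>
    VV_Msub (4*K) hNr b (2*(K:ℤ)) a (by push_cast; ring)
  have hM0 : u (2*(K:ℤ)) = - v 0 := by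
    have h := hMsubU 0; rw [show 2*(K:ℤ) - 0 = 2*(K:ℤ) from by ring] at h; exact h
  have hNsub : ∀ a : ℤ, u (4*(K:ℤ) - a) = u a := by
    intro a
    have h := UU_Nsub (4*K) hNr b a
    rw [show ((4*K:ℕ):ℤ) = 4*(K:ℤ) from by push_cast; ring] at h
    exact h
  -- key reduction
  have key : ∀ i j k l : ℤ, i + j + k + l = ((4*K:ℕ):ℤ) → psi (4*K) b i j k l = 0 →
      u (i+j) + u (i+k) + u (i+l) + u 0 + v i + v j + v k + v l = 0 := by
    intro i j k l hs h0
    rw [psi_expand (4*K) hNr b i j k l hs] at h0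
    rw [hu, hv]
    linarith
  -- S1 family
  have hS1 : ∀ n : ℤ, 1 ≤ n → n ≤ (K:ℤ) - 1 →
      u (n+1) + v (n+1) - (u n + v n) - (u 1 + v 1) + (u 0 + v 0) = 0 := by
    intro n hn1 hn2
    have mem : ((0 : ℤ), n+1, 2*(K:ℤ) - n, 2*(K:ℤ) - 1) ∈ S1set (4*K) ∪ S2set (4*K) :=
      Or.inl ⟨n, hn1, by omega, by rw [hdiv2]⟩
    have H0 := hb _ mem
    dsimp only at H0
    have H := key 0 (n+1) (2*(K:ℤ) - n) (2*(K:ℤ) - 1) (by omega) H0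
    rw [show (0:ℤ) + (n+1) = n+1 from by ring,
      show (0:ℤ) + (2*(K:ℤ) - n) = 2*(K:ℤ) - n from by ring,
      show (0:ℤ) + (2*(K:ℤ) - 1) = 2*(K:ℤ) - 1 from by ring,
      hMsubU n, hMsubU 1, hMsubV n, hMsubV 1] at H
    linarith
  -- S2, m = 1
  have hD2 : u 2 + (- v 0) + (- v 0) + u 0 + v 1 + v 1 + (- u 1) + (- u 1) = 0 := by
    have mem : ((2:ℤ) - 1, (1:ℤ), 2*(K:ℤ) - 1, 2*(K:ℤ) - 1) ∈ S1set (4*K) ∪ S2set (4*K) :=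
      Or.inr ⟨1, Or.inl rfl, by rw [hdiv2]⟩
    have H0 := hb _ mem
    dsimp only at H0
    have H := key (2-1) 1 (2*(K:ℤ) - 1) (2*(K:ℤ) - 1) (by omega) H0
    rw [show (2:ℤ) - 1 + 1 = 2 from by ring,
      show (2:ℤ) - 1 + (2*(K:ℤ) - 1) = 2*(K:ℤ) from by ring,
      show (2:ℤ) - 1 = 1 from by ring,
      hM0, hMsubV 1] at H
    exact H
  -- S2, m ≥ 3
  have hS2c : ∀ c : ℤ, 2 ≤ c → c ≤ (K:ℤ) →
      v (c+1) - 2*v c + v (c-1) + DR = 0 := by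
    intro c hc1 hc2
    have mem : ((2:ℤ) - (c+1), c+1, 2*(K:ℤ) - 1, 2*(K:ℤ) - 1)
        ∈ S1set (4*K) ∪ S2set (4*K) :=
      Or.inr ⟨c+1, Or.inr ⟨by omega, by omega⟩, by rw [hdiv2]⟩
    have H0 := hb _ mem
    dsimp only at H0
    have H := key (2-(c+1)) (c+1) (2*(K:ℤ) - 1) (2*(K:ℤ) - 1) (by omega) H0
    rw [show (2:ℤ) - (c+1) + (c+1) = 2 from by ring,
      show (2:ℤ) - (c+1) + (2*(K:ℤ) - 1) = 2*(K:ℤ) - c from by ring,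
      show (2:ℤ) - (c+1) = -(c-1) from by ring,
      hMsubU c, hMsubV 1, hNegV (c-1)] at H
    linarith [hDR]
  -- second difference of v is -DR on [1, K]
  have Gd : ∀ c : ℤ, 1 ≤ c → c ≤ (K:ℤ) → v (c+1) - 2*v c + v (c-1) = -DR := by
    intro c hc1 hc2
    by_cases hc : c = 1
    · subst hc
      have h := hS1 1 le_rfl (by omega)
      rw [show (1:ℤ)+1 = 2 from by norm_num] at h
      rw [show (1:ℤ)+1 = 2 from by norm_num, show (1:ℤ)-1 = 0 from by norm_num]
      linarith [hDR]
    · linarith [hS2c c (by omega) hc2]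
  -- first difference of w is sR on [1, K]
  have Fd : ∀ a : ℤ, 1 ≤ a → a ≤ (K:ℤ) →
      (u a + v a) - (u (a-1) + v (a-1)) = sR := by
    intro a ha1 ha2
    by_cases hc : a = 1
    · subst hc
      rw [show (1:ℤ)-1 = 0 from by norm_num]
    · have h := hS1 (a-1) (by omega) (by omega)
      rw [show a-1+1 = a from by ring] at h
      linarith [hsR]
  -- w is affine on [0, K]
  have Fa : ∀ a : ℤ, 0 ≤ a → a ≤ (K:ℤ) → u a + v a = (u 0 + v 0) + (a:ℝ) * sR := by
    intro a ha
    refine Int.le_induction (motive := fun a _ => a ≤ (K:ℤ) → u a + v a = (u 0 + v 0) + (a:ℝ) * sR)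
      (fun _ => by norm_num) (fun n hn ih h => ?_) a ha
    have hd := Fd (n+1) (by omega) h
    rw [show n+1-1 = n from by ring] at hd
    have ih' := ih (by omega)
    push_cast
    push_cast at ih'
    linear_combination hd + ih'
  -- w K = 0
  have wK0 : u (K:ℤ) + v (K:ℤ) = 0 := by
    have h := hMsubV (K:ℤ)
    rw [show 2*(K:ℤ) - (K:ℤ) = (K:ℤ) from by ring] at h
    linarith
  have hw0 : u 0 + v 0 = -((K:ℝ)) * sR := by
    have h := Fa (K:ℤ) (by omega) le_rfl
    push_cast at h
    linarith [wK0]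
  have Fw : ∀ a : ℤ, 0 ≤ a → a ≤ (K:ℤ) → u a + v a = ((a:ℝ) - (K:ℝ)) * sR := by
    intro a h1 h2
    have h := Fa a h1 h2
    rw [hw0] at h
    linear_combination h
  -- first difference of v
  have Fvd : ∀ a : ℤ, 1 ≤ a → a ≤ (K:ℤ) + 1 →
      2*(v a - v (a-1)) = -DR * (2*(a:ℝ) - 1) := by
    intro a ha
    refine Int.le_induction
      (motive := fun a _ => a ≤ (K:ℤ) + 1 → 2*(v a - v (a-1)) = -DR * (2*(a:ℝ) - 1))
      (fun _ => ?_) (fun n hn ih h => ?_) a ha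
    · rw [show (1:ℤ)-1 = 0 from by norm_num]
      push_cast
      linarith [hD2, hDR]
    · have hg := Gd n hn (by omega)
      have ih' := ih (by omega)
      rw [show n+1-1 = n from by ring]
      push_cast
      push_cast at ih'
      linear_combination 2*hg + ih'
  -- v quadratic on [0, K+1]
  have Fv : ∀ a : ℤ, 0 ≤ a → a ≤ (K:ℤ) + 1 → 2*v a = 2*v 0 - DR*(a:ℝ)^2 := by
    intro a ha
    refine Int.le_induction (motive := fun a _ => a ≤ (K:ℤ) + 1 → 2*v a = 2*v 0 - DR*(a:ℝ)^2)
      (fun _ => by norm_num) (fun n hn ih h => ?_) a ha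
    have hd := Fvd (n+1) (by omega) h
    rw [show n+1-1 = n from by ring] at hd
    have ih' := ih (by omega)
    push_cast
    push_cast at ih' hd
    linear_combination hd + ih'
  -- slope relation
  have hsD : sR = -(2*(K:ℝ))*DR := by
    have h := hMsubV ((K:ℤ)-1)
    rw [show 2*(K:ℤ) - ((K:ℤ)-1) = (K:ℤ)+1 from by ring] at h
    have h1 := Fv ((K:ℤ)+1) (by omega) le_rfl
    have h2 := Fw ((K:ℤ)-1) (by omega) (by omega)
    have h3 := Fv ((K:ℤ)-1) (by omega) (by omega)
    push_cast at h1 h2 h3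
    linear_combination -h + h1/2 + h2 - h3/2
  -- v global
  have FvAll : ∀ a : ℤ, -(2*(K:ℤ)) ≤ a → a ≤ 2*(K:ℤ) →
      2*v a = 2*v 0 - DR*(a:ℝ)^2 := by
    have main : ∀ a : ℤ, 0 ≤ a → a ≤ 2*(K:ℤ) → 2*v a = 2*v 0 - DR*(a:ℝ)^2 := by
      intro a h0 h2
      by_cases hle : a ≤ (K:ℤ) + 1
      · exact Fv a h0 hle
      · have hA := hMsubV (2*(K:ℤ) - a)
        rw [show 2*(K:ℤ) - (2*(K:ℤ) - a) = a from by ring] at hA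
        have hB := Fw (2*(K:ℤ) - a) (by omega) (by omega)
        have hC := Fv (2*(K:ℤ) - a) (by omega) (by omega)
        push_cast at hB hC ⊢
        linear_combination 2*hA - 2*hB + hC + (-2*((K:ℝ) - (a:ℝ)))*hsD
    intro a h1 h2
    rcases le_or_gt 0 a with h | h
    · exact main a h h2
    · have hm := main (-a) (by omega) (by omega)
      rw [hNegV a] at hm
      push_cast at hm ⊢
      linear_combination hm
  -- u global
  have FuAll : ∀ p : ℤ, 0 ≤ p → p ≤ 4*(K:ℤ) →
      2*u p = -(2*v 0) + DR*(2*(K:ℝ) - (p:ℝ))^2 := by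
    have main : ∀ p : ℤ, 0 ≤ p → p ≤ 2*(K:ℤ) →
        2*u p = -(2*v 0) + DR*(2*(K:ℝ) - (p:ℝ))^2 := by
      intro p h0 h2
      have hA := hMsubU (2*(K:ℤ) - p)
      rw [show 2*(K:ℤ) - (2*(K:ℤ) - p) = p from by ring] at hA
      have hB := FvAll (2*(K:ℤ) - p) (by omega) (by omega)
      push_cast at hB ⊢
      linear_combination 2*hA - hB
    intro p h0 h4
    rcases le_or_gt p (2*(K:ℤ)) with h | h
    · exact main p h0 h
    · have hA := hNsub (4*(K:ℤ) - p)
      rw [show 4*(K:ℤ) - (4*(K:ℤ) - p) = p from by ring] at hA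
      have hm := main (4*(K:ℤ) - p) (by omega) (by omega)
      push_cast at hm ⊢
      linear_combination hm + 2*hA
  -- final
  rintro ⟨i, j, k, l⟩ hx
  simp only [Sset, Set.mem_setOf_eq] at hx
  obtain ⟨h1, h2, h3, h4, h5, h6⟩ := hx
  dsimp only at h1 h2 h3 h4 h5 h6 ⊢
  rw [psi_expand (4*K) hNr b i j k l h6]
  have e1 := FuAll (i+j) (by omega) (by omega)
  have e2 := FuAll (i+k) (by omega) (by omega)
  have e3 := FuAll (i+l) (by omega) (by omega)
  have e0 := FuAll 0 (by omega) (by omega)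
  have f1 := FvAll i (by omega) (by omega)
  have f2 := FvAll j (by omega) (by omega)
  have f3 := FvAll k (by omega) (by omega)
  have f4 := FvAll l (by omega) (by omega)
  have h6' : (i:ℝ) + j + k + l = 4*(K:ℝ) := by exact_mod_cast congrArg (Int.cast : ℤ → ℝ) h6
  have Hz : u (i+j) + u (i+k) + u (i+l) + u 0 + v i + v j + v k + v l = 0 := by
    push_cast at e1 e2 e3 e0 f1 f2 f3 f4
    linear_combination (1/2)*(e1 + e2 + e3 + e0 + f1 + f2 + f3 + f4)
      + (DR*((i:ℝ) - 2*(K:ℝ)))*h6'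
  rw [hu, hv] at Hz
  rw [Hz]
  ring
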